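/- arXiv:2506.08373 — 5 statements merged into one kernel-verified Lean document; each statement's English description precedes it below -/
import Mathlib

section
/- For all vectors x, y ∈ ℝⁿ, the softmax map satisfies ‖Softmax(x) − Softmax(y)‖₂ ≤ ‖x − y‖_∞, where ‖·‖₂ is the Euclidean norm and ‖·‖_∞ is the supremum norm. -/
open scoped BigOperators ENNReal

/-- Softmax map on `ℝⁿ`. -/
noncomputable def softmax {n : ℕ} (x : Fin n → ℝ) : Fin n → ℝ :=
  fun i => Real.exp (x i) / ∑ j, Real.exp (x j)

/-- Euclidean norm on `ℝⁿ`. -/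
noncomputable def l2norm {n : ℕ} (x : Fin n → ℝ) : ℝ :=
  Real.sqrt (∑ i, x i ^ 2)

/-- Supremum norm on `ℝⁿ`. -/
noncomputable def linftyNorm {n : ℕ} (x : Fin n → ℝ) : ℝ :=
  ⨆ i, |x i|

/-- Spectral norm (operator norm w.r.t. Euclidean norms) of a real matrix. -/
noncomputable def spectralNorm_ {m n : ℕ} (A : Matrix (Fin m) (Fin n) ℝ) : ℝ :=
  sSup { r | ∃ x : Fin n → ℝ, l2norm x ≤ 1 ∧ r = l2norm (A.mulVec x) }

/-- Smallest singular value of a square real matrix. -/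
noncomputable def sigmaMin {d : ℕ} (W : Matrix (Fin d) (Fin d) ℝ) : ℝ :=
  sInf { r | ∃ x : Fin d → ℝ, l2norm x = 1 ∧ r = l2norm (W.mulVec x) }

/-- `‖X‖_{∞,2}`: the maximum Euclidean norm of a row of `X`. -/
noncomputable def maxRowNorm {n d : ℕ} (X : Matrix (Fin n) (Fin d) ℝ) : ℝ :=
  ⨆ i, l2norm (X i)

/-- variance-type bound: for a prob vector s and |v i| ≤ M,
    ∑ (s i)^2 * (v i - μ)^2 ≤ M^2 where μ = ∑ s j * v j. -/
lemma softmax_aux_var {n : ℕ} (s v : Fin n → ℝ) (M : ℝ)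
    (hs0 : ∀ i, 0 ≤ s i) (hs1 : ∀ i, s i ≤ 1) (hsum : ∑ i, s i = 1)
    (hv : ∀ i, |v i| ≤ M) :
    ∑ i, (s i * (v i - ∑ j, s j * v j)) ^ 2 ≤ M ^ 2 := by
  set μ := ∑ j, s j * v j with hμ
  have h1 : ∀ i, (s i * (v i - μ)) ^ 2 ≤ s i * (v i - μ) ^ 2 := by
    intro i
    have : (s i * (v i - μ)) ^ 2 = (s i * s i) * (v i - μ) ^ 2 := by ring
    rw [this]
    exact mul_le_mul_of_nonneg_right
      (mul_le_of_le_one_right (hs0 i) (hs1 i)) (sq_nonneg _)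
  calc ∑ i, (s i * (v i - μ)) ^ 2 ≤ ∑ i, s i * (v i - μ) ^ 2 :=
        Finset.sum_le_sum fun i _ => h1 i
    _ = (∑ i, s i * v i ^ 2) - μ ^ 2 := by
        have : ∀ i, s i * (v i - μ) ^ 2
            = s i * v i ^ 2 - (2 * μ) * (s i * v i) + μ ^ 2 * s i := by
          intro i; ring
        simp_rw [this, Finset.sum_add_distrib, Finset.sum_sub_distrib,
          ← Finset.mul_sum, ← hμ, hsum]
        ring
    _ ≤ ∑ i, s i * v i ^ 2 := by nlinarith [sq_nonneg μ]
    _ ≤ ∑ i, s i * M ^ 2 := by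
        refine Finset.sum_le_sum fun i _ => mul_le_mul_of_nonneg_left ?_ (hs0 i)
        calc v i ^ 2 = |v i| ^ 2 := (sq_abs _).symm
          _ ≤ M ^ 2 := by
              have := hv i; nlinarith [abs_nonneg (v i)]
    _ = M ^ 2 := by rw [← Finset.sum_mul, hsum, one_mul]


/-- `‖Softmax(x) − Softmax(y)‖₂ ≤ ‖x − y‖_∞`. -/
theorem softmax_l2_le_linfty {n : ℕ} (x y : Fin n → ℝ) :
    l2norm (softmax x - softmax y) ≤ linftyNorm (x - y) := by
  rcases Nat.eq_zero_or_pos n with hn | hn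
  · subst hn
    simp [l2norm, linftyNorm, Real.iSup_of_isEmpty]
  haveI : Nonempty (Fin n) := ⟨⟨0, hn⟩⟩
  set v : Fin n → ℝ := fun i => x i - y i with hv
  set a : Fin n → ℝ := fun i => softmax x i - softmax y i with ha
  set M : ℝ := linftyNorm (x - y) with hM
  have hvM : ∀ i, |v i| ≤ M := by
    intro i
    have : |v i| = |(x - y) i| := by simp [hv]
    rw [this, hM, linftyNorm]
    exact le_ciSup (f := fun j => |(x - y) j|) (Set.Finite.bddAbove (Set.finite_range _)) i
  have hM0 : 0 ≤ M := le_trans (abs_nonneg _) (hvM ⟨0, hn⟩)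
  set L : ℝ := Real.sqrt (∑ i, a i ^ 2) with hL
  -- key : L ^ 2 ≤ L * M via MVT on F t = ∑ a i * softmax (y + t v) i
  set E : Fin n → ℝ → ℝ := fun i t => Real.exp (y i + t * v i) with hE
  set Z : ℝ → ℝ := fun t => ∑ j, E j t with hZ
  have hZpos : ∀ t, 0 < Z t := fun t =>
    Finset.sum_pos (fun j _ => Real.exp_pos _) Finset.univ_nonempty
  set F : ℝ → ℝ := fun t => ∑ i, a i * (E i t / Z t) with hF
  set F' : ℝ → ℝ := fun t =>
    ∑ i, a i * ((E i t * v i * Z t - E i t * (∑ j, E j t * v j)) / Z t ^ 2) with hF'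
  have hEderiv : ∀ i t, HasDerivAt (E i) (E i t * v i) t := by
    intro i t
    have h1 : HasDerivAt (fun t : ℝ => y i + t * v i) (v i) t := by
      simpa using ((hasDerivAt_id t).mul_const (v i)).const_add (y i)
    simpa [hE] using h1.exp
  have hZderiv : ∀ t, HasDerivAt Z (∑ j, E j t * v j) t := by
    intro t
    exact HasDerivAt.fun_sum (fun j _ => hEderiv j t)
  have hFderiv : ∀ t, HasDerivAt F (F' t) t := by
    intro t
    refine HasDerivAt.fun_sum (fun i _ => ?_)
    exact ((hEderiv i t).div (hZderiv t) (hZpos t).ne').const_mul (a i)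
  -- bound on |F' t|
  have hbound : ∀ t, |F' t| ≤ L * M := by
    intro t
    set s : Fin n → ℝ := fun i => E i t / Z t with hs
    have hs0 : ∀ i, 0 ≤ s i := fun i =>
      div_nonneg (Real.exp_nonneg _) (hZpos t).le
    have hZt : Z t = ∑ j, E j t := rfl
    have hssum : ∑ i, s i = 1 := by
      rw [hs, ← Finset.sum_div, ← hZt, div_self (hZpos t).ne']
    have hs1 : ∀ i, s i ≤ 1 := by
      intro i
      rw [hs, div_le_one (hZpos t), hZt]
      have hpos : ∀ j, (0:ℝ) ≤ E j t := by intro j; rw [hE]; positivity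
      exact Finset.single_le_sum (f := fun j => E j t) (fun j _ => hpos j)
        (Finset.mem_univ i)
    have hrw : F' t = ∑ i, a i * (s i * (v i - ∑ j, s j * v j)) := by
      rw [hF']
      refine Finset.sum_congr rfl fun i _ => ?_
      have hZne := (hZpos t).ne'
      congr 1
      rw [hs]
      have hμ : ∑ j, (E j t / Z t) * v j = (∑ j, E j t * v j) / Z t := by
        rw [Finset.sum_div]; exact Finset.sum_congr rfl fun j _ => by ring
      rw [hμ]
      field_simp
    rw [hrw]
    have hcs : ∑ i, a i * (s i * (v i - ∑ j, s j * v j)) ≤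
        Real.sqrt (∑ i, a i ^ 2) *
          Real.sqrt (∑ i, (s i * (v i - ∑ j, s j * v j)) ^ 2) :=
      Real.sum_mul_le_sqrt_mul_sqrt _ _ _
    have hcs' : -(∑ i, a i * (s i * (v i - ∑ j, s j * v j))) ≤
        Real.sqrt (∑ i, a i ^ 2) *
          Real.sqrt (∑ i, (s i * (v i - ∑ j, s j * v j)) ^ 2) := by
      have := Real.sum_mul_le_sqrt_mul_sqrt Finset.univ (fun i => -a i)
        (fun i => s i * (v i - ∑ j, s j * v j))
      simpa [neg_mul, Finset.sum_neg_distrib] using this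
    have hvar : Real.sqrt (∑ i, (s i * (v i - ∑ j, s j * v j)) ^ 2) ≤ M := by
      rw [show M = Real.sqrt (M ^ 2) by rw [Real.sqrt_sq hM0]]
      exact Real.sqrt_le_sqrt (softmax_aux_var s v M hs0 hs1 hssum hvM)
    have h2 : Real.sqrt (∑ i, a i ^ 2) *
        Real.sqrt (∑ i, (s i * (v i - ∑ j, s j * v j)) ^ 2) ≤ L * M := by
      rw [hL]
      exact mul_le_mul_of_nonneg_left hvar (Real.sqrt_nonneg _)
    rw [abs_le]
    constructor
    · linarith
    · linarith
  -- MVT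
  have hmvt : |F 1 - F 0| ≤ L * M := by
    have := norm_image_sub_le_of_norm_deriv_le_segment'
      (f := F) (f' := F') (a := (0:ℝ)) (b := 1) (C := L * M)
      (fun t _ => (hFderiv t).hasDerivWithinAt)
      (fun t _ => by simpa [Real.norm_eq_abs] using hbound t)
      1 (by norm_num)
    simpa [Real.norm_eq_abs] using this
  have hE1 : ∀ i, E i 1 = Real.exp (x i) := by
    intro i; rw [hE]; simp [hv]
  have hE0 : ∀ i, E i 0 = Real.exp (y i) := by
    intro i; rw [hE]; simp
  have hF1 : F 1 = ∑ i, a i * softmax x i := by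
    rw [hF]
    refine Finset.sum_congr rfl fun i _ => ?_
    rw [softmax]
    simp_rw [hZ, hE1]
  have hF0 : F 0 = ∑ i, a i * softmax y i := by
    rw [hF]
    refine Finset.sum_congr rfl fun i _ => ?_
    rw [softmax]
    simp_rw [hZ, hE0]
  have hdiff : F 1 - F 0 = ∑ i, a i ^ 2 := by
    rw [hF1, hF0, ← Finset.sum_sub_distrib]
    refine Finset.sum_congr rfl fun i _ => ?_
    rw [ha]; ring
  have hL2 : L ^ 2 ≤ L * M := by
    have h1 : L ^ 2 = ∑ i, a i ^ 2 := by
      rw [hL, Real.sq_sqrt (Finset.sum_nonneg fun i _ => sq_nonneg _)]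
    rw [h1, ← hdiff]
    calc F 1 - F 0 ≤ |F 1 - F 0| := le_abs_self _
      _ ≤ L * M := hmvt
  have hgoal : l2norm (softmax x - softmax y) = L := by
    rw [l2norm, hL]
    congr 1
  rw [hgoal]
  rcases eq_or_lt_of_le (Real.sqrt_nonneg (∑ i, a i ^ 2) : (0:ℝ) ≤ L) with h0 | h0
  · rw [hL, ← h0]; exact hM0
  · have := hL2
    nlinarith
end

section
/- Let p ∈ ℝⁿ be a probability vector, i.e., p_i ≥ 0 for all i and Σ_{i=1}^n p_i = 1. Then for every z ∈ ℝⁿ, ‖(diag(p) − p pᵀ) z‖₂ ≤ ‖z‖_∞, where diag(p) is the diagonal matrix with entries p, ‖·‖₂ is the Euclidean norm, and ‖·‖_∞ is the supremum norm. (The matrix diag(p) − p pᵀ is the Jacobian of the softmax map at any point whose softmax equals p.) -/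
open scoped BigOperators ENNReal

/-- Spectral norm (operator norm w.r.t. Euclidean norms) of a real matrix. -/
noncomputable def matSpectralNorm {m n : ℕ} (A : Matrix (Fin m) (Fin n) ℝ) : ℝ :=
  sSup { r | ∃ x : Fin n → ℝ, l2norm x ≤ 1 ∧ r = l2norm (A.mulVec x) }

/-- the softmax Jacobian `diag(p) − p pᵀ` at a probability vector `p`
satisfies `‖(diag(p) − p pᵀ) z‖₂ ≤ ‖z‖_∞`. -/
theorem softmax_jacobian_bound {n : ℕ} (p z : Fin n → ℝ)
    (hp : ∀ i, 0 ≤ p i) (hsum : ∑ i, p i = 1) :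
    l2norm ((Matrix.diagonal p - Matrix.of fun i j => p i * p j).mulVec z)
      ≤ linftyNorm z := by
  rcases Nat.eq_zero_or_pos n with hn | hn
  · subst hn; simp at hsum
  have hne : Nonempty (Fin n) := ⟨⟨0, hn⟩⟩
  set M := linftyNorm z with hM
  have hbdd : BddAbove (Set.range fun i => |z i|) := Set.Finite.bddAbove (Set.finite_range _)
  have hzM : ∀ i, |z i| ≤ M := fun i => le_ciSup hbdd i
  have hM0 : 0 ≤ M := le_trans (abs_nonneg _) (hzM (Classical.arbitrary _))
  set s := ∑ j, p j * z j with hs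
  have hentry : ∀ i, (Matrix.diagonal p - Matrix.of fun i j => p i * p j).mulVec z i
      = p i * (z i - s) := by
    intro i
    simp [Matrix.sub_mulVec, Matrix.mulVec, dotProduct, Matrix.diagonal, hs,
      Finset.mul_sum, mul_sub, mul_assoc, Finset.sum_ite_eq, mul_comm]
    exact Finset.sum_congr rfl fun j _ => by ring
  have hp1 : ∀ i, p i ≤ 1 := by
    intro i
    calc p i ≤ ∑ j, p j := Finset.single_le_sum (fun j _ => hp j) (Finset.mem_univ i)
    _ = 1 := hsum
  have key : ∑ i, ((Matrix.diagonal p - Matrix.of fun i j => p i * p j).mulVec z i) ^ 2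
      ≤ M ^ 2 := by
    calc ∑ i, ((Matrix.diagonal p - Matrix.of fun i j => p i * p j).mulVec z i) ^ 2
        = ∑ i, (p i * (z i - s)) ^ 2 := by
          exact Finset.sum_congr rfl fun i _ => by rw [hentry i]
      _ ≤ ∑ i, p i * (z i - s) ^ 2 := by
          apply Finset.sum_le_sum
          intro i _
          have : (p i * (z i - s)) ^ 2 = p i ^ 2 * (z i - s) ^ 2 := by ring
          rw [this]
          apply mul_le_mul_of_nonneg_right _ (sq_nonneg _)
          nlinarith [hp i, hp1 i]
      _ = (∑ i, p i * z i ^ 2) - 2 * s * (∑ i, p i * z i) + s ^ 2 * (∑ i, p i) := by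
          have e : ∀ i : Fin n, p i * (z i - s) ^ 2
              = p i * z i ^ 2 - 2 * s * (p i * z i) + s ^ 2 * p i := fun i => by ring
          rw [Finset.sum_congr rfl fun i _ => e i, Finset.sum_add_distrib,
            Finset.sum_sub_distrib, ← Finset.mul_sum, ← Finset.mul_sum]
      _ = (∑ i, p i * z i ^ 2) - s ^ 2 := by rw [hsum, ← hs]; ring
      _ ≤ M ^ 2 - s ^ 2 := by
          have : ∑ i, p i * z i ^ 2 ≤ ∑ i, p i * M ^ 2 := by
            apply Finset.sum_le_sum
            intro i _
            apply mul_le_mul_of_nonneg_left _ (hp i)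
            calc z i ^ 2 = |z i| ^ 2 := (sq_abs _).symm
              _ ≤ M ^ 2 := by
                  exact pow_le_pow_left₀ (abs_nonneg _) (hzM i) 2
          have h2 : ∑ i, p i * M ^ 2 = M ^ 2 := by rw [← Finset.sum_mul, hsum, one_mul]
          linarith
      _ ≤ M ^ 2 := by nlinarith [sq_nonneg s]
  rw [l2norm]
  calc Real.sqrt (∑ i, ((Matrix.diagonal p - Matrix.of fun i j => p i * p j).mulVec z i) ^ 2)
      ≤ Real.sqrt (M ^ 2) := Real.sqrt_le_sqrt key
    _ = M := Real.sqrt_sq hM0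
end

section
/- Let x, x' ∈ ℝⁿ and set y = Softmax(x), y' = Softmax(x'). Let m = min_i min(y_i, y'_i) and fix p with 1 ≤ p ≤ ∞. If ‖y − y'‖_p ≤ ε, then there exists a scalar c ∈ ℝ such that ‖x − x' − c·𝟏‖_p ≤ ε/m, where 𝟏 ∈ ℝⁿ is the all-ones vector and ‖·‖_p denotes the ℓ_p norm. -/
open scoped BigOperators ENNReal

/-- Spectral norm (operator norm w.r.t. Euclidean norms) of a real matrix. -/
noncomputable def spectralNormMat {m n : ℕ} (A : Matrix (Fin m) (Fin n) ℝ) : ℝ :=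
  sSup { r | ∃ x : Fin n → ℝ, l2norm x ≤ 1 ∧ r = l2norm (A.mulVec x) }

/-- `ℓ_p` norm on `ℝⁿ` for `p ∈ [1, ∞]` (given as an extended nonnegative real). -/
noncomputable def lpNorm {n : ℕ} (p : ℝ≥0∞) (x : Fin n → ℝ) : ℝ :=
  if p = ⊤ then ⨆ i, |x i| else (∑ i, |x i| ^ p.toReal) ^ (1 / p.toReal)

private lemma abs_log_sub_log_le {a b : ℝ} (ha : 0 < a) (hb : 0 < b) :
    |Real.log a - Real.log b| ≤ |a - b| / min a b := by
  have key : ∀ u v : ℝ, 0 < u → 0 < v → u ≤ v →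
      Real.log v - Real.log u ≤ (v - u) / u := by
    intro u v hu hv huv
    have h1 : Real.log (v / u) ≤ v / u - 1 :=
      Real.log_le_sub_one_of_pos (div_pos hv hu)
    rw [Real.log_div hv.ne' hu.ne'] at h1
    calc Real.log v - Real.log u ≤ v / u - 1 := h1
      _ = (v - u) / u := by field_simp
  rcases le_total a b with hab | hab
  · have h1 := key a b ha hb hab
    have hlog : Real.log a ≤ Real.log b := Real.log_le_log ha hab
    rw [abs_sub_comm, abs_of_nonneg (by linarith), abs_sub_comm,
      abs_of_nonneg (by linarith), min_eq_left hab]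
    exact h1
  · have h1 := key b a hb ha hab
    have hlog : Real.log b ≤ Real.log a := Real.log_le_log hb hab
    rw [abs_of_nonneg (by linarith), abs_of_nonneg (by linarith), min_eq_right hab]
    exact h1

private lemma lpNorm_le_mul {n : ℕ} (hn : 0 < n) (p : ℝ≥0∞) (hp : 1 ≤ p) {M : ℝ}
    (hM : 0 ≤ M) (v w : Fin n → ℝ) (hvw : ∀ i, |v i| ≤ M * |w i|) :
    lpNorm p v ≤ M * lpNorm p w := by
  have : Nonempty (Fin n) := ⟨⟨0, hn⟩⟩
  unfold lpNorm
  by_cases hpt : p = ⊤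
  · simp only [hpt, if_pos rfl]
    refine ciSup_le fun i => ?_
    refine (hvw i).trans (mul_le_mul_of_nonneg_left ?_ hM)
    exact le_ciSup (f := fun j => |w j|) (Set.Finite.bddAbove (Set.finite_range _)) i
  · simp only [if_neg hpt]
    have ht : (1 : ℝ) ≤ p.toReal := by
      have := ENNReal.toReal_mono hpt hp
      simpa using this
    have ht0 : 0 < p.toReal := lt_of_lt_of_le one_pos ht
    set t := p.toReal
    have step1 : (∑ i, |v i| ^ t) ≤ M ^ t * ∑ i, |w i| ^ t := by
      rw [Finset.mul_sum]
      refine Finset.sum_le_sum fun i _ => ?_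
      calc |v i| ^ t ≤ (M * |w i|) ^ t :=
            Real.rpow_le_rpow (abs_nonneg _) (hvw i) ht0.le
        _ = M ^ t * |w i| ^ t := Real.mul_rpow hM (abs_nonneg _)
    have hsum : 0 ≤ ∑ i, |v i| ^ t :=
      Finset.sum_nonneg fun i _ => Real.rpow_nonneg (abs_nonneg _) _
    have hsum' : 0 ≤ ∑ i, |w i| ^ t :=
      Finset.sum_nonneg fun i _ => Real.rpow_nonneg (abs_nonneg _) _
    calc (∑ i, |v i| ^ t) ^ (1 / t)
        ≤ (M ^ t * ∑ i, |w i| ^ t) ^ (1 / t) :=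
          Real.rpow_le_rpow hsum step1 (by positivity)
      _ = (M ^ t) ^ (1 / t) * (∑ i, |w i| ^ t) ^ (1 / t) :=
          Real.mul_rpow (Real.rpow_nonneg hM _) hsum'
      _ = M * (∑ i, |w i| ^ t) ^ (1 / t) := by
          rw [← Real.rpow_mul hM, mul_one_div_cancel ht0.ne', Real.rpow_one]

/-- if `‖Softmax(x) − Softmax(x')‖_p ≤ ε` then there is a scalar `c` with
`‖x − x' − c·𝟏‖_p ≤ ε / m`, where `m = min_i min((Softmax x)_i, (Softmax x')_i)`. -/
theorem inverse_softmax_bound {n : ℕ} (hn : 0 < n) (x x' : Fin n → ℝ)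
    (p : ℝ≥0∞) (hp : 1 ≤ p) (ε : ℝ)
    (h : lpNorm p (softmax x - softmax x') ≤ ε) :
    ∃ c : ℝ, lpNorm p (x - x' - fun _ => c)
      ≤ ε / ⨅ i, min (softmax x i) (softmax x' i) := by
  have : Nonempty (Fin n) := ⟨⟨0, hn⟩⟩
  set y := softmax x
  set y' := softmax x'
  set m := ⨅ i, min (y i) (y' i) with hm_def
  have hZpos : ∀ z : Fin n → ℝ, 0 < ∑ j, Real.exp (z j) := fun z =>
    Finset.sum_pos (fun j _ => Real.exp_pos _) Finset.univ_nonempty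
  have hypos : ∀ i, 0 < y i := fun i => div_pos (Real.exp_pos _) (hZpos x)
  have hy'pos : ∀ i, 0 < y' i := fun i => div_pos (Real.exp_pos _) (hZpos x')
  have hmpos : 0 < m := by
    obtain ⟨i0, hi0⟩ := exists_eq_ciInf_of_finite (f := fun i => min (y i) (y' i))
    rw [hm_def, ← hi0]
    exact lt_min (hypos i0) (hy'pos i0)
  have hm_le : ∀ i, m ≤ min (y i) (y' i) := fun i =>
    ciInf_le (Set.Finite.bddBelow (Set.finite_range _)) i
  set Z := ∑ j, Real.exp (x j)
  set Z' := ∑ j, Real.exp (x' j)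
  set v : Fin n → ℝ := x - x' - fun _ => Real.log Z - Real.log Z' with hv_def
  refine ⟨Real.log Z - Real.log Z', ?_⟩
  have key : ∀ i, |v i|
      ≤ m⁻¹ * |(y - y') i| := by
    intro i
    have hxi : v i = Real.log (y i) - Real.log (y' i) := by
      have h1 : Real.log (y i) = x i - Real.log Z := by
        rw [show y i = Real.exp (x i) / Z from rfl,
          Real.log_div (Real.exp_ne_zero _) (hZpos x).ne', Real.log_exp]
      have h2 : Real.log (y' i) = x' i - Real.log Z' := by
        rw [show y' i = Real.exp (x' i) / Z' from rfl,
          Real.log_div (Real.exp_ne_zero _) (hZpos x').ne', Real.log_exp]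
      rw [hv_def]
      simp only [Pi.sub_apply]
      rw [h1, h2]; ring
    rw [hxi]
    calc |Real.log (y i) - Real.log (y' i)|
        ≤ |y i - y' i| / min (y i) (y' i) := abs_log_sub_log_le (hypos i) (hy'pos i)
      _ ≤ |y i - y' i| / m :=
          div_le_div_of_nonneg_left (abs_nonneg _) hmpos (hm_le i)
      _ = m⁻¹ * |(y - y') i| := by rw [Pi.sub_apply]; ring
  have hbound := lpNorm_le_mul hn p hp (inv_nonneg.mpr hmpos.le) v (y - y') key
  calc lpNorm p v
      ≤ m⁻¹ * lpNorm p (y - y') := hbound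
    _ ≤ m⁻¹ * ε := mul_le_mul_of_nonneg_left h (inv_nonneg.mpr hmpos.le)
    _ = ε / m := by rw [div_eq_inv_mul]
end

section
/- Let W_q, W_k ∈ ℝ^{d×d}, let X = [x_1, …, x_{n_in}]ᵀ ∈ ℝ^{n_in×d} be a matrix of input embeddings, and let x_1^{(o)}, …, x_{n_out}^{(o)} ∈ ℝᵈ and x̂_1^{(o)}, …, x̂_{n_out}^{(o)} ∈ ℝᵈ be output embeddings and their approximations. Define the importance score vectors sᵀ = (1/n_out) Σ_{i=1}^{n_out} Softmax(x_i^{(o)T} W_q W_kᵀ Xᵀ / √d) and ŝᵀ = (1/n_out) Σ_{i=1}^{n_out} Softmax(x̂_i^{(o)T} W_q W_kᵀ Xᵀ / √d). If ‖x_i^{(o)} − x̂_i^{(o)}‖₂ ≤ ε for all i = 1, …, n_out, and ‖x_j‖₂ ≤ √d for all j = 1, …, n_in, then ‖s − ŝ‖₂ ≤ ε ‖W_q W_kᵀ‖₂, where ‖·‖₂ on matrices denotes the spectral norm. -/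
open scoped BigOperators ENNReal

/-! ### Auxiliary lemmas -/

open Finset

noncomputable def toE {n : ℕ} (x : Fin n → ℝ) : EuclideanSpace ℝ (Fin n) :=
  (WithLp.linearEquiv 2 ℝ (Fin n → ℝ)).symm x

lemma l2norm_eq_norm {n : ℕ} (x : Fin n → ℝ) : l2norm x = ‖toE x‖ := by
  rw [EuclideanSpace.norm_eq, l2norm]
  congr 1
  refine Finset.sum_congr rfl fun i _ => ?_
  rw [Real.norm_eq_abs, sq_abs]
  rfl

lemma l2norm_nonneg' {n : ℕ} (x : Fin n → ℝ) : 0 ≤ l2norm x := Real.sqrt_nonneg _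

lemma l2norm_zero' {n : ℕ} : l2norm (0 : Fin n → ℝ) = 0 := by simp [l2norm]

lemma l2norm_smul' {n : ℕ} (c : ℝ) (x : Fin n → ℝ) : l2norm (c • x) = |c| * l2norm x := by
  rw [l2norm_eq_norm, l2norm_eq_norm]
  have : toE (c • x) = c • toE x := by rfl
  rw [this, norm_smul, Real.norm_eq_abs]

lemma dot_le {n : ℕ} (u w : Fin n → ℝ) :
    |dotProduct u w| ≤ l2norm u * l2norm w := by
  rw [l2norm_eq_norm, l2norm_eq_norm]
  have := abs_real_inner_le_norm (toE u) (toE w)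
  refine le_trans (le_of_eq ?_) this
  simp [PiLp.inner_apply, RCLike.inner_apply, dotProduct, toE, mul_comm]

noncomputable def mulVecCLM {m n : ℕ} (A : Matrix (Fin m) (Fin n) ℝ) :
    EuclideanSpace ℝ (Fin n) →L[ℝ] EuclideanSpace ℝ (Fin m) :=
  LinearMap.toContinuousLinearMap
    { toFun := fun x => toE (A.mulVec ((WithLp.linearEquiv 2 ℝ (Fin n → ℝ)) x))
      map_add' := fun x y => by
        simp only [map_add, Matrix.mulVec_add, toE, map_add]
      map_smul' := fun c x => by
        simp only [map_smul, Matrix.mulVec_smul, toE, RingHom.id_apply] }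

lemma mulVecCLM_apply {m n : ℕ} (A : Matrix (Fin m) (Fin n) ℝ) (x : Fin n → ℝ) :
    mulVecCLM A (toE x) = toE (A.mulVec x) := rfl

lemma spectral_bddAbove {m n : ℕ} (A : Matrix (Fin m) (Fin n) ℝ) :
    BddAbove { r | ∃ x : Fin n → ℝ, l2norm x ≤ 1 ∧ r = l2norm (A.mulVec x) } := by
  refine ⟨‖mulVecCLM A‖, fun r hr => ?_⟩
  obtain ⟨x, hx, rfl⟩ := hr
  calc l2norm (A.mulVec x) = ‖mulVecCLM A (toE x)‖ := by rw [l2norm_eq_norm, mulVecCLM_apply]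
    _ ≤ ‖mulVecCLM A‖ * ‖toE x‖ := (mulVecCLM A).le_opNorm _
    _ ≤ ‖mulVecCLM A‖ * 1 := by
        refine mul_le_mul_of_nonneg_left ?_ (norm_nonneg _)
        rw [← l2norm_eq_norm]; exact hx
    _ = ‖mulVecCLM A‖ := mul_one _

lemma spectralNorm_nonneg' {m n : ℕ} (A : Matrix (Fin m) (Fin n) ℝ) : 0 ≤ matSpectralNorm A := by
  refine le_csSup (spectral_bddAbove A) ⟨0, ?_, ?_⟩
  · rw [l2norm_zero']; norm_num
  · rw [Matrix.mulVec_zero, l2norm_zero']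

lemma mulVec_le {m n : ℕ} (A : Matrix (Fin m) (Fin n) ℝ) (x : Fin n → ℝ) :
    l2norm (A.mulVec x) ≤ matSpectralNorm A * l2norm x := by
  rcases eq_or_ne x 0 with rfl | hx
  · rw [Matrix.mulVec_zero, l2norm_zero', l2norm_zero', mul_zero]
  · have hc : 0 < l2norm x := by
      rw [l2norm_eq_norm]
      rw [norm_pos_iff]
      intro h
      apply hx
      have : (WithLp.linearEquiv 2 ℝ (Fin n → ℝ)) (toE x) = x := rfl
      rw [h] at this
      simpa using this.symm
    set c := l2norm x with hcdef
    have hmem : l2norm (A.mulVec (c⁻¹ • x)) ≤ matSpectralNorm A := by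
      refine le_csSup (spectral_bddAbove A) ⟨c⁻¹ • x, ?_, rfl⟩
      rw [l2norm_smul', abs_of_pos (inv_pos.2 hc), inv_mul_cancel₀ hc.ne']
    have heq : l2norm (A.mulVec (c⁻¹ • x)) = c⁻¹ * l2norm (A.mulVec x) := by
      rw [Matrix.mulVec_smul, l2norm_smul', abs_of_pos (inv_pos.2 hc)]
    rw [heq] at hmem
    calc l2norm (A.mulVec x) = c * (c⁻¹ * l2norm (A.mulVec x)) := by
          field_simp
      _ ≤ c * matSpectralNorm A := mul_le_mul_of_nonneg_left hmem hc.le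
      _ = matSpectralNorm A * c := mul_comm _ _

lemma softmax_lipschitz {n : ℕ} (a b : Fin n → ℝ) (δ : ℝ) (hδ : 0 ≤ δ)
    (h : ∀ j, |b j - a j| ≤ δ) :
    l2norm (softmax b - softmax a) ≤ δ := by
  rcases Nat.eq_zero_or_pos n with hn | hn
  · subst hn
    simp [l2norm, hδ]
  set v : Fin n → ℝ := fun j => b j - a j with hv
  set u : ℝ → Fin n → ℝ := fun t j => a j + t * v j with hu
  set D : ℝ → ℝ := fun t => ∑ j, Real.exp (u t j) with hD
  have hDpos : ∀ t, 0 < D t := by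
    intro t
    refine Finset.sum_pos (fun j _ => Real.exp_pos _) ?_
    exact univ_nonempty_iff.2 (Fin.pos_iff_nonempty.mp hn)
  set p : ℝ → Fin n → ℝ := fun t => softmax (u t) with hp
  set m : ℝ → ℝ := fun t => ∑ j, p t j * v j with hm
  set g : ℝ → EuclideanSpace ℝ (Fin n) := fun t => toE (p t) with hg
  set g' : ℝ → EuclideanSpace ℝ (Fin n) := fun t => toE (fun i => p t i * (v i - m t)) with hg'
  have hderiv : ∀ t, HasDerivAt g (g' t) t := by
    intro t
    have hcomp : ∀ i : Fin n, HasDerivAt (fun s => p s i) (p t i * (v i - m t)) t := by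
      intro i
      have hnum : HasDerivAt (fun s => Real.exp (u s i)) (Real.exp (u t i) * v i) t := by
        have : HasDerivAt (fun s => a i + s * v i) (v i) t := by
          simpa using ((hasDerivAt_id t).mul_const (v i)).const_add (a i)
        exact this.exp
      have hden : HasDerivAt D (∑ j, Real.exp (u t j) * v j) t := by
        apply HasDerivAt.fun_sum
        intro j _
        have : HasDerivAt (fun s => a j + s * v j) (v j) t := by
          simpa using ((hasDerivAt_id t).mul_const (v j)).const_add (a j)
        exact this.exp
      have hdiv := hnum.div hden (hDpos t).ne'
      have heq : (Real.exp (u t i) * v i * D t - Real.exp (u t i) * ∑ j, Real.exp (u t j) * v j)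
          / D t ^ 2 = p t i * (v i - m t) := by
        have hD0 := (hDpos t).ne'
        simp only [hp, softmax, hm]
        rw [show (∑ j, Real.exp (u t j)) = D t from rfl]
        have : ∑ j, Real.exp (u t j) / D t * v j = (∑ j, Real.exp (u t j) * v j) / D t := by
          rw [Finset.sum_div]
          exact Finset.sum_congr rfl fun j _ => by ring
        rw [this]
        field_simp
      rw [heq] at hdiv
      exact hdiv
    have hpi : HasDerivAt (fun s => p s) (fun i => p t i * (v i - m t)) t :=
      hasDerivAt_pi.2 hcomp
    have := ((EuclideanSpace.equiv (Fin n) ℝ).symm.hasFDerivAt).comp_hasDerivAt t hpi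
    exact this
  have hbound : ∀ t, ‖g' t‖ ≤ δ := by
    intro t
    have hp_nonneg : ∀ i, 0 ≤ p t i := fun i =>
      div_nonneg (Real.exp_pos _).le (hDpos t).le
    have hp_le_one : ∀ i, p t i ≤ 1 := by
      intro i
      rw [hp]
      show Real.exp (u t i) / D t ≤ 1
      rw [div_le_one (hDpos t)]
      exact Finset.single_le_sum (fun j _ => (Real.exp_pos (u t j)).le) (mem_univ i)
    have hsum1 : ∑ i, p t i = 1 := by
      simp only [hp, softmax]
      rw [← Finset.sum_div, show (∑ i, Real.exp (u t i)) = D t from rfl]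
      exact div_self (hDpos t).ne'
    have hv2 : ∀ i, v i ^ 2 ≤ δ ^ 2 := fun i => sq_le_sq' (abs_le.1 (h i)).1 (abs_le.1 (h i)).2
    have key : ∑ i, (p t i * (v i - m t)) ^ 2 ≤ δ ^ 2 := by
      have s1 : ∑ i, (p t i * (v i - m t)) ^ 2 ≤ ∑ i, p t i * (v i - m t) ^ 2 := by
        refine Finset.sum_le_sum fun i _ => ?_
        have h1 := hp_nonneg i
        have h2 := hp_le_one i
        nlinarith [mul_nonneg (mul_nonneg h1 (sub_nonneg.mpr h2)) (sq_nonneg (v i - m t))]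
      have s2 : ∑ i, p t i * (v i - m t) ^ 2 = (∑ i, p t i * v i ^ 2) - m t ^ 2 := by
        have e1 : ∀ i : Fin n, p t i * (v i - m t) ^ 2 =
            p t i * v i ^ 2 - 2 * m t * (p t i * v i) + m t ^ 2 * p t i := fun i => by ring
        rw [Finset.sum_congr rfl fun i _ => e1 i]
        rw [Finset.sum_add_distrib, Finset.sum_sub_distrib, ← Finset.mul_sum, ← Finset.mul_sum,
          hsum1, show (∑ i, p t i * v i) = m t from rfl]
        ring
      have s3 : ∑ i, p t i * v i ^ 2 ≤ δ ^ 2 := by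
        calc ∑ i, p t i * v i ^ 2 ≤ ∑ i, p t i * δ ^ 2 :=
              Finset.sum_le_sum fun i _ => mul_le_mul_of_nonneg_left (hv2 i) (hp_nonneg i)
          _ = δ ^ 2 := by rw [← Finset.sum_mul, hsum1, one_mul]
      nlinarith [sq_nonneg (m t)]
    calc ‖g' t‖ = Real.sqrt (∑ i, (p t i * (v i - m t)) ^ 2) := by
          rw [hg', ← l2norm_eq_norm, l2norm]
      _ ≤ Real.sqrt (δ ^ 2) := Real.sqrt_le_sqrt key
      _ = δ := by rw [Real.sqrt_sq hδ]
  have hmvt := norm_image_sub_le_of_norm_deriv_le_segment_01'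
    (f := g) (f' := g') (fun t _ => (hderiv t).hasDerivWithinAt)
    (fun t _ => hbound t)
  have hga : g 0 = toE (softmax a) := by
    simp only [hg, hp, hu]
    have : (fun j => a j + 0 * v j) = a := by
      ext j; simp
    rw [this]
  have hgb : g 1 = toE (softmax b) := by
    simp only [hg, hp, hu]
    have : (fun j => a j + 1 * v j) = b := by
      ext j; simp [hv]
    rw [this]
  rw [hga, hgb] at hmvt
  rw [l2norm_eq_norm]
  calc ‖toE (softmax b - softmax a)‖ = ‖toE (softmax b) - toE (softmax a)‖ := by
        rw [toE, map_sub]; rfl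
    _ ≤ δ := hmvt

/-- if `‖x_i^{(o)} − x̂_i^{(o)}‖₂ ≤ ε` for all `i` and `‖x_j‖₂ ≤ √d` for all `j`,
then the importance score vectors satisfy `‖s − ŝ‖₂ ≤ ε ‖W_q W_kᵀ‖₂`. -/
theorem importance_score_bound {d nin nout : ℕ} (hnout : 0 < nout)
    (Wq Wk : Matrix (Fin d) (Fin d) ℝ)
    (X : Matrix (Fin nin) (Fin d) ℝ)
    (xo xohat : Fin nout → Fin d → ℝ) (ε : ℝ)
    (hxo : ∀ i, l2norm (xo i - xohat i) ≤ ε)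
    (hX : ∀ j, l2norm (X j) ≤ Real.sqrt d) :
    l2norm
      (((nout : ℝ)⁻¹ • ∑ i, softmax fun j =>
          dotProduct (xo i) ((Wq * Wk.transpose).mulVec (X j)) / Real.sqrt d) -
        ((nout : ℝ)⁻¹ • ∑ i, softmax fun j =>
          dotProduct (xohat i) ((Wq * Wk.transpose).mulVec (X j)) / Real.sqrt d))
      ≤ ε * matSpectralNorm (Wq * Wk.transpose) := by
  set M := Wq * Wk.transpose with hM
  set K := matSpectralNorm M with hKdef
  have hK : 0 ≤ K := spectralNorm_nonneg' M
  have hε : 0 ≤ ε := le_trans (l2norm_nonneg' _) (hxo ⟨0, hnout⟩)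
  set A : Fin nout → Fin nin → ℝ :=
    fun i j => dotProduct (xo i) (M.mulVec (X j)) / Real.sqrt d with hA
  set B : Fin nout → Fin nin → ℝ :=
    fun i j => dotProduct (xohat i) (M.mulVec (X j)) / Real.sqrt d with hB
  have hentry : ∀ i j, |A i j - B i j| ≤ ε * K := by
    intro i j
    have hz : |dotProduct (xo i - xohat i) (M.mulVec (X j))| ≤ ε * (K * Real.sqrt d) := by
      refine le_trans (dot_le _ _) ?_
      refine mul_le_mul (hxo i) ?_ (l2norm_nonneg' _) hε
      refine le_trans (mulVec_le M (X j)) ?_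
      exact mul_le_mul_of_nonneg_left (hX j) hK
    have hdiff : A i j - B i j =
        dotProduct (xo i - xohat i) (M.mulVec (X j)) / Real.sqrt d := by
      simp only [hA, hB]
      rw [sub_dotProduct, sub_div]
    rw [hdiff]
    rcases eq_or_lt_of_le (Real.sqrt_nonneg (d : ℝ)) with h0 | hpos
    · rw [← h0, div_zero, abs_zero]
      positivity
    · rw [abs_div, abs_of_pos hpos, div_le_iff₀ hpos]
      calc |dotProduct (xo i - xohat i) (M.mulVec (X j))| ≤ ε * (K * Real.sqrt d) := hz
        _ = ε * K * Real.sqrt d := by ring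
  have hterm : ∀ i, l2norm (softmax (A i) - softmax (B i)) ≤ ε * K := by
    intro i
    exact softmax_lipschitz (B i) (A i) (ε * K) (mul_nonneg hε hK) (hentry i)
  have hgoal : l2norm (((nout : ℝ)⁻¹ • ∑ i, softmax (A i)) -
      ((nout : ℝ)⁻¹ • ∑ i, softmax (B i))) ≤ ε * K := by
    have hrw : ((nout : ℝ)⁻¹ • ∑ i, softmax (A i)) - ((nout : ℝ)⁻¹ • ∑ i, softmax (B i)) =
        (nout : ℝ)⁻¹ • ∑ i, (softmax (A i) - softmax (B i)) := by
      rw [← smul_sub, Finset.sum_sub_distrib]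
    rw [hrw, l2norm_eq_norm]
    have htoE : toE ((nout : ℝ)⁻¹ • ∑ i, (softmax (A i) - softmax (B i))) =
        (nout : ℝ)⁻¹ • ∑ i, toE (softmax (A i) - softmax (B i)) := by
      rw [toE, map_smul, map_sum]; rfl
    rw [htoE, norm_smul, Real.norm_eq_abs, abs_of_pos (by positivity : (0:ℝ) < (nout : ℝ)⁻¹)]
    calc (nout : ℝ)⁻¹ * ‖∑ i, toE (softmax (A i) - softmax (B i))‖
        ≤ (nout : ℝ)⁻¹ * ∑ i, ‖toE (softmax (A i) - softmax (B i))‖ := by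
          exact mul_le_mul_of_nonneg_left (norm_sum_le _ _) (by positivity)
      _ ≤ (nout : ℝ)⁻¹ * ∑ _i : Fin nout, (ε * K) := by
          refine mul_le_mul_of_nonneg_left (Finset.sum_le_sum fun i _ => ?_) (by positivity)
          rw [← l2norm_eq_norm]
          exact hterm i
      _ = (nout : ℝ)⁻¹ * ((nout : ℝ) * (ε * K)) := by
          rw [Finset.sum_const, card_univ, Fintype.card_fin, nsmul_eq_mul]
      _ = ε * K := by
          field_simp
  exact hgoal
end

section
/- Let a, â ∈ ℝⁿ be probability vectors whose difference a − â has at most 2k nonzero entries, let X ∈ ℝ^{n×d}, and let W_v, Ŵ_v ∈ ℝ^{d×d} with smallest singular value σ_min(W_v) > 0. Suppose there exist c > 0 and 0 ≤ δ < 1 such that cXᵀ satisfies the Restricted Isometry Property with parameters (2k, δ), i.e., (1−δ)‖v‖₂ ≤ ‖cXᵀ v‖₂ ≤ (1+δ)‖v‖₂ for every v ∈ ℝⁿ with at most 2k nonzero entries. If ‖W_v − Ŵ_v‖₂ ≤ ε and the output error satisfies ‖aᵀ X W_v − âᵀ X Ŵ_v‖₂ ≤ ε ‖X‖_{∞,2},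 then ‖a − â‖₂ ≤ 2cε ‖X‖_{∞,2} / (σ_min(W_v)(1−δ)). -/
open scoped BigOperators ENNReal

namespace RIPaux

noncomputable def toE {n : ℕ} (x : Fin n → ℝ) : EuclideanSpace ℝ (Fin n) :=
  (WithLp.equiv 2 (Fin n → ℝ)).symm x

lemma l2norm_eq {n : ℕ} (x : Fin n → ℝ) : l2norm x = ‖toE x‖ := by
  rw [EuclideanSpace.norm_eq]
  simp [l2norm, toE, Real.norm_eq_abs, sq_abs]

lemma l2norm_nonneg {n : ℕ} (x : Fin n → ℝ) : 0 ≤ l2norm x := by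
  rw [l2norm_eq]; exact norm_nonneg _

lemma l2norm_eq_zero {n : ℕ} {x : Fin n → ℝ} (h : l2norm x = 0) : x = 0 := by
  rw [l2norm_eq, norm_eq_zero] at h
  exact (WithLp.equiv 2 (Fin n → ℝ)).symm.injective h

lemma toE_surj {n : ℕ} : Function.Surjective (toE (n := n)) :=
  (WithLp.equiv 2 (Fin n → ℝ)).symm.surjective

noncomputable def mclm {m n : ℕ} (A : Matrix (Fin m) (Fin n) ℝ) :
    EuclideanSpace ℝ (Fin n) →L[ℝ] EuclideanSpace ℝ (Fin m) :=
  LinearMap.toContinuousLinearMap (Matrix.toEuclideanLin A)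

lemma mclm_apply {m n : ℕ} (A : Matrix (Fin m) (Fin n) ℝ) (x : Fin n → ℝ) :
    mclm A (toE x) = toE (A.mulVec x) := rfl

lemma spectralNorm_eq {m n : ℕ} (A : Matrix (Fin m) (Fin n) ℝ) :
    matSpectralNorm A = ‖mclm A‖ := by
  rw [← (mclm A).sSup_unitClosedBall_eq_norm]
  refine congrArg sSup ?_
  ext r
  constructor
  · rintro ⟨x, hx, rfl⟩
    refine ⟨toE x, ?_, ?_⟩
    · simpa [Metric.mem_closedBall, ← l2norm_eq] using hx
    · show ‖mclm A (toE x)‖ = l2norm (A.mulVec x)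
      rw [mclm_apply, l2norm_eq]
  · rintro ⟨y, hy, rfl⟩
    obtain ⟨x, rfl⟩ := toE_surj y
    refine ⟨x, ?_, ?_⟩
    · rw [l2norm_eq]; simpa [Metric.mem_closedBall] using hy
    · show ‖mclm A (toE x)‖ = l2norm (A.mulVec x)
      rw [mclm_apply, l2norm_eq]

lemma conjT_eq_transpose {m n : ℕ} (A : Matrix (Fin m) (Fin n) ℝ) :
    A.conjTranspose = A.transpose := by
  ext i j; simp [Matrix.conjTranspose_apply]

lemma mclm_transpose {m n : ℕ} (A : Matrix (Fin m) (Fin n) ℝ) :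
    mclm A.transpose = ContinuousLinearMap.adjoint (mclm A) := by
  rw [← conjT_eq_transpose, mclm, Matrix.toEuclideanLin_conjTranspose_eq_adjoint]
  exact LinearMap.adjoint_toContinuousLinearMap _

lemma norm_mclm_transpose {m n : ℕ} (A : Matrix (Fin m) (Fin n) ℝ) :
    ‖mclm A.transpose‖ = ‖mclm A‖ := by
  rw [mclm_transpose]
  exact ContinuousLinearMap.adjoint.norm_map _

lemma mulVec_le_spectral {m n : ℕ} (A : Matrix (Fin m) (Fin n) ℝ) (x : Fin n → ℝ) :
    l2norm (A.mulVec x) ≤ matSpectralNorm A * l2norm x := by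
  rw [l2norm_eq, l2norm_eq, ← mclm_apply, spectralNorm_eq]
  exact (mclm A).le_opNorm _

lemma vecMul_le_spectral {m n : ℕ} (A : Matrix (Fin m) (Fin n) ℝ) (x : Fin m → ℝ) :
    l2norm (Matrix.vecMul x A) ≤ matSpectralNorm A * l2norm x := by
  rw [← Matrix.mulVec_transpose]
  calc l2norm (A.transpose.mulVec x) ≤ matSpectralNorm A.transpose * l2norm x :=
        mulVec_le_spectral _ _
    _ = matSpectralNorm A * l2norm x := by
        rw [spectralNorm_eq, spectralNorm_eq, norm_mclm_transpose]

lemma spectralNorm_nonneg {m n : ℕ} (A : Matrix (Fin m) (Fin n) ℝ) :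
    0 ≤ matSpectralNorm A := by rw [spectralNorm_eq]; exact norm_nonneg _

lemma sigmaMin_mul_le {d : ℕ} (W : Matrix (Fin d) (Fin d) ℝ) (x : Fin d → ℝ) :
    sigmaMin W * l2norm x ≤ l2norm (W.mulVec x) := by
  by_cases hx : x = 0
  · subst hx; simp [l2norm]
  · have hxn : 0 < l2norm x := by
      rcases (l2norm_nonneg x).lt_or_eq with h | h
      · exact h
      · exact absurd (l2norm_eq_zero h.symm) hx
    set t := l2norm x with ht
    have hunit : l2norm (t⁻¹ • x) = 1 := by
      rw [l2norm_eq]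
      have he : toE (t⁻¹ • x) = t⁻¹ • toE x := rfl
      rw [he, norm_smul, Real.norm_eq_abs, abs_of_pos (inv_pos.mpr hxn), ← l2norm_eq, ← ht]
      field_simp
    have hbdd : BddBelow { r | ∃ y : Fin d → ℝ, l2norm y = 1 ∧ r = l2norm (W.mulVec y) } := by
      refine ⟨0, ?_⟩
      rintro r ⟨y, _, rfl⟩
      exact l2norm_nonneg _
    have h1 : sigmaMin W ≤ l2norm (W.mulVec (t⁻¹ • x)) :=
      csInf_le hbdd ⟨t⁻¹ • x, hunit, rfl⟩
    have h2 : l2norm (W.mulVec (t⁻¹ • x)) = t⁻¹ * l2norm (W.mulVec x) := by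
      rw [Matrix.mulVec_smul, l2norm_eq, l2norm_eq]
      have he : toE (t⁻¹ • W.mulVec x) = t⁻¹ • toE (W.mulVec x) := rfl
      rw [he, norm_smul, Real.norm_eq_abs, abs_of_pos (inv_pos.mpr hxn)]
    rw [h2] at h1
    rw [mul_comm]
    calc t * sigmaMin W ≤ t * (t⁻¹ * l2norm (W.mulVec x)) :=
          mul_le_mul_of_nonneg_left h1 hxn.le
      _ = l2norm (W.mulVec x) := by field_simp

lemma sigmaMin_transpose_mul_le {d : ℕ} (W : Matrix (Fin d) (Fin d) ℝ)
    (hσ : 0 < sigmaMin W) (u : Fin d → ℝ) :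
    sigmaMin W * l2norm u ≤ l2norm (W.transpose.mulVec u) := by
  set σ := sigmaMin W with hs
  have hinj : Function.Injective (W.mulVec) := by
    intro x y hxy
    have h := sigmaMin_mul_le W (x - y)
    rw [Matrix.mulVec_sub, sub_eq_zero.mpr hxy] at h
    have h0 : l2norm (0 : Fin d → ℝ) = 0 := by simp [l2norm]
    rw [h0] at h
    have hzero : l2norm (x - y) = 0 := by nlinarith [l2norm_nonneg (x - y)]
    exact sub_eq_zero.mp (l2norm_eq_zero hzero)
  have hU : IsUnit W := Matrix.mulVec_injective_iff_isUnit.mp hinj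
  have hdet : IsUnit W.det := (Matrix.isUnit_iff_isUnit_det W).mp hU
  have hWW : W * W⁻¹ = 1 := Matrix.mul_nonsing_inv W hdet
  -- bound on the operator norm of W⁻¹
  have hinv : ∀ w : Fin d → ℝ, l2norm (W⁻¹.mulVec w) ≤ σ⁻¹ * l2norm w := by
    intro w
    have h1 : σ * l2norm (W⁻¹.mulVec w) ≤ l2norm (W.mulVec (W⁻¹.mulVec w)) :=
      sigmaMin_mul_le W _
    rw [Matrix.mulVec_mulVec, hWW, Matrix.one_mulVec] at h1
    rw [← mul_le_mul_iff_right₀ hσ]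
    calc σ * l2norm (W⁻¹.mulVec w) ≤ l2norm w := h1
      _ = σ * (σ⁻¹ * l2norm w) := by field_simp
  have hopinv : ‖mclm (W⁻¹)‖ ≤ σ⁻¹ := by
    apply ContinuousLinearMap.opNorm_le_bound _ (inv_nonneg.mpr hσ.le)
    intro y
    obtain ⟨w, rfl⟩ := toE_surj y
    rw [mclm_apply, ← l2norm_eq, ← l2norm_eq]
    exact hinv w
  -- main bound
  set z := W.transpose.mulVec u with hz
  have hrec : (W⁻¹.transpose).mulVec z = u := by
    rw [hz, Matrix.mulVec_mulVec, ← Matrix.transpose_mul, hWW, Matrix.transpose_one,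
      Matrix.one_mulVec]
  have : l2norm u ≤ σ⁻¹ * l2norm z := by
    calc l2norm u = l2norm ((W⁻¹.transpose).mulVec z) := by rw [hrec]
      _ = ‖mclm (W⁻¹.transpose) (toE z)‖ := by rw [mclm_apply, ← l2norm_eq]
      _ ≤ ‖mclm (W⁻¹.transpose)‖ * ‖toE z‖ := (mclm _).le_opNorm _
      _ = ‖mclm (W⁻¹)‖ * l2norm z := by rw [norm_mclm_transpose, l2norm_eq]
      _ ≤ σ⁻¹ * l2norm z := by
          exact mul_le_mul_of_nonneg_right hopinv (l2norm_nonneg _)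
  calc σ * l2norm u ≤ σ * (σ⁻¹ * l2norm z) := mul_le_mul_of_nonneg_left this hσ.le
    _ = l2norm z := by field_simp

lemma row_le_maxRowNorm {n d : ℕ} (X : Matrix (Fin n) (Fin d) ℝ) (i : Fin n) :
    l2norm (X i) ≤ maxRowNorm X := by
  show l2norm (X i) ≤ ⨆ i, l2norm (X i)
  exact le_ciSup (f := fun i => l2norm (X i)) (Set.Finite.bddAbove (Set.finite_range _)) i

lemma prob_vecMul_le {n d : ℕ} (X : Matrix (Fin n) (Fin d) ℝ) (p : Fin n → ℝ)
    (hp : ∀ i, 0 ≤ p i) (hs : ∑ i, p i = 1) :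
    l2norm (Matrix.vecMul p X) ≤ maxRowNorm X := by
  have hpi : Matrix.vecMul p X = ∑ i, p i • X i := by
    ext j
    simp [Matrix.vecMul, dotProduct, Finset.sum_apply]
  have hrep : toE (Matrix.vecMul p X) = ∑ i, p i • toE (X i) := by
    rw [hpi]
    show (WithLp.linearEquiv 2 ℝ (Fin d → ℝ)).symm (∑ i, p i • X i)
      = ∑ i, p i • (WithLp.linearEquiv 2 ℝ (Fin d → ℝ)).symm (X i)
    rw [map_sum]
    simp
  rw [l2norm_eq, hrep]
  calc ‖∑ i, p i • toE (X i)‖ ≤ ∑ i, ‖p i • toE (X i)‖ := norm_sum_le _ _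
    _ = ∑ i, p i * l2norm (X i) := by
        refine Finset.sum_congr rfl fun i _ => ?_
        rw [norm_smul, Real.norm_eq_abs, abs_of_nonneg (hp i), l2norm_eq]
    _ ≤ ∑ i, p i * maxRowNorm X :=
        Finset.sum_le_sum fun i _ =>
          mul_le_mul_of_nonneg_left (row_le_maxRowNorm X i) (hp i)
    _ = maxRowNorm X := by rw [← Finset.sum_mul, hs, one_mul]

end RIPaux

/-- the RIP-based attention error bound
`‖a − â‖₂ ≤ 2cε‖X‖_{∞,2} / (σ_min(W_v)(1−δ))`. -/
theorem rip_attention_error_bound {n d k : ℕ} (a ahat : Fin n → ℝ)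
    (X : Matrix (Fin n) (Fin d) ℝ) (Wv Wvhat : Matrix (Fin d) (Fin d) ℝ)
    (c δ ε : ℝ)
    (ha : ∀ i, 0 ≤ a i) (hasum : ∑ i, a i = 1)
    (hahat : ∀ i, 0 ≤ ahat i) (hahatsum : ∑ i, ahat i = 1)
    (hsparse : ∃ s : Finset (Fin n), s.card ≤ 2 * k ∧ ∀ i ∉ s, (a - ahat) i = 0)
    (hσ : 0 < sigmaMin Wv)
    (hc : 0 < c) (hδ0 : 0 ≤ δ) (hδ1 : δ < 1)
    (hRIP : ∀ v : Fin n → ℝ,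
      (∃ s : Finset (Fin n), s.card ≤ 2 * k ∧ ∀ i ∉ s, v i = 0) →
        (1 - δ) * l2norm v ≤ l2norm ((c • X.transpose).mulVec v) ∧
        l2norm ((c • X.transpose).mulVec v) ≤ (1 + δ) * l2norm v)
    (hW : matSpectralNorm (Wv - Wvhat) ≤ ε)
    (hout : l2norm (Matrix.vecMul a (X * Wv) - Matrix.vecMul ahat (X * Wvhat))
      ≤ ε * maxRowNorm X) :
    l2norm (a - ahat) ≤ 2 * c * ε * maxRowNorm X / (sigmaMin Wv * (1 - δ)) := by
  classical
  set v := a - ahat with hv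
  set R := maxRowNorm X with hR
  have hε : 0 ≤ ε := le_trans (RIPaux.spectralNorm_nonneg _) hW
  obtain ⟨h1, -⟩ := hRIP v hsparse
  set u := Matrix.vecMul v X with hu
  have hcv : (c • X.transpose).mulVec v = c • u := by
    rw [Matrix.smul_mulVec, Matrix.mulVec_transpose]
  have hcnorm : l2norm ((c • X.transpose).mulVec v) = c * l2norm u := by
    rw [hcv, RIPaux.l2norm_eq, RIPaux.l2norm_eq]
    have he : RIPaux.toE (c • u) = c • RIPaux.toE u := rfl
    rw [he, norm_smul, Real.norm_eq_abs, abs_of_pos hc]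
  rw [hcnorm] at h1
  have hdecomp : Matrix.vecMul v (X * Wv)
      = (Matrix.vecMul a (X * Wv) - Matrix.vecMul ahat (X * Wvhat))
        - Matrix.vecMul ahat (X * (Wv - Wvhat)) := by
    rw [hv, Matrix.sub_vecMul, Matrix.mul_sub, Matrix.vecMul_sub]
    abel
  have hT : l2norm (Matrix.vecMul ahat (X * (Wv - Wvhat))) ≤ ε * R := by
    rw [← Matrix.vecMul_vecMul]
    calc l2norm (Matrix.vecMul (Matrix.vecMul ahat X) (Wv - Wvhat))
        ≤ matSpectralNorm (Wv - Wvhat) * l2norm (Matrix.vecMul ahat X) :=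
          RIPaux.vecMul_le_spectral _ _
      _ ≤ ε * R := mul_le_mul hW (RIPaux.prob_vecMul_le X ahat hahat hahatsum)
          (RIPaux.l2norm_nonneg _) hε
  have htri : ∀ (y z : Fin d → ℝ), l2norm (y - z) ≤ l2norm y + l2norm z := by
    intro y z
    have he : RIPaux.toE (y - z) = RIPaux.toE y - RIPaux.toE z := rfl
    rw [RIPaux.l2norm_eq, RIPaux.l2norm_eq, RIPaux.l2norm_eq, he]
    exact norm_sub_le _ _
  have htot : l2norm (Matrix.vecMul v (X * Wv)) ≤ 2 * ε * R := by
    rw [hdecomp]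
    calc l2norm _ ≤ l2norm (Matrix.vecMul a (X * Wv) - Matrix.vecMul ahat (X * Wvhat))
          + l2norm (Matrix.vecMul ahat (X * (Wv - Wvhat))) := htri _ _
      _ ≤ ε * R + ε * R := add_le_add hout hT
      _ = 2 * ε * R := by ring
  have hlow : sigmaMin Wv * l2norm u ≤ l2norm (Matrix.vecMul v (X * Wv)) := by
    rw [← Matrix.vecMul_vecMul, ← hu, ← Matrix.mulVec_transpose]
    exact RIPaux.sigmaMin_transpose_mul_le Wv hσ u
  have h2 : sigmaMin Wv * l2norm u ≤ 2 * ε * R := hlow.trans htot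
  have hσδ : 0 < sigmaMin Wv * (1 - δ) := mul_pos hσ (by linarith)
  rw [le_div_iff₀ hσδ]
  nlinarith [mul_le_mul_of_nonneg_left h1 hσ.le, mul_le_mul_of_nonneg_left h2 hc.le,
    RIPaux.l2norm_nonneg u, RIPaux.l2norm_nonneg v]
end
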